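/- Under the up rounding of the Moving Knife fractional allocation with n−1 fractional items, the subsidies satisfy s_1 ≤ 1 − x_1, s_n = 0, and s_i ≤ max{x_{i−1} − x_i, 0} for all 2 ≤ i ≤ n−1. -/
import Mathlib


open Finset

/-- Up rounding of the Moving Knife fractional allocation with `n-1` fractional
items. Fractional item `e_i` (for `1 ≤ i ≤ n-1`) is shared by agents `i` and
`i+1`, with agent `i` holding fraction `x i ∈ [0,1]`; `c i e` is agent `i`'s
cost for item `e`, with `c i e ∈ [0,1]` and the IDO property
`c i (e_i) ≤ c i (e_{i-1})`. Up rounding gives each `e_i` fully to agent `i`,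
so `s 1 = (1 - x 1)·c 1 (e_1)`, `s n = 0`, and
`s i = max{(x_{i-1} - 1)·c_i(e_{i-1}) + (1 - x_i)·c_i(e_i), 0}` for
`2 ≤ i ≤ n-1`. Then `s 1 ≤ 1 - x 1`, `s n = 0`, and
`s i ≤ max{x_{i-1} - x_i, 0}` for `2 ≤ i ≤ n-1`. -/
theorem upRounding_subsidy (n : ℕ) (hn : 2 ≤ n) (x : ℕ → ℝ) (c : ℕ → ℕ → ℝ)
    (s : ℕ → ℝ)
    (hx : ∀ i, 1 ≤ i → i ≤ n - 1 → 0 ≤ x i ∧ x i ≤ 1)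
    (hc : ∀ i e, 0 ≤ c i e ∧ c i e ≤ 1)
    (hIDO : ∀ i, c i i ≤ c i (i - 1))
    (hs1 : s 1 = (1 - x 1) * c 1 1)
    (hsn : s n = 0)
    (hsi : ∀ i, 2 ≤ i → i ≤ n - 1 →
      s i = max ((x (i - 1) - 1) * c i (i - 1) + (1 - x i) * c i i) 0) :
    s 1 ≤ 1 - x 1 ∧ s n = 0 ∧
      ∀ i, 2 ≤ i → i ≤ n - 1 → s i ≤ max (x (i - 1) - x i) 0 := by
  have h1 : 1 ≤ n - 1 := by omega
  obtain ⟨hx10, hx11⟩ := hx 1 le_rfl h1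
  obtain ⟨hc10, hc11⟩ := hc 1 1
  refine ⟨by nlinarith [hs1], hsn, ?_⟩
  intro i h2 hin
  obtain ⟨hxi0, hxi1⟩ := hx i (by omega) hin
  obtain ⟨hxp0, hxp1⟩ := hx (i-1) (by omega) (by omega)
  obtain ⟨hci0, hci1⟩ := hc i i
  obtain ⟨hcp0, hcp1⟩ := hc i (i-1)
  have hido := hIDO i
  rw [hsi i h2 hin]
  rcases le_total (x i) (x (i-1)) with h | h
  · have : (x (i - 1) - 1) * c i (i - 1) + (1 - x i) * c i i ≤ x (i-1) - x i := by
      nlinarith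
    calc max ((x (i - 1) - 1) * c i (i - 1) + (1 - x i) * c i i) 0
        ≤ max (x (i-1) - x i) 0 := max_le_max this le_rfl
      _ ≤ _ := le_rfl
  · have : (x (i - 1) - 1) * c i (i - 1) + (1 - x i) * c i i ≤ 0 := by nlinarith
    simp [max_le_iff, this, le_max_right]
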